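/- Λ(P,Q) is primitive as an abstract lattice if and only if both (1/λ)P and (1/λ)Q are primitive binary quadratic forms, where λ is the gcd of the contents of P and Q. -/

import Mathlib

/-- The binary quadratic form `[a,b,c]` identified with the even symmetric matrix
`[[2a, b], [b, 2c]]`. -/
def formMatrix (a b c : ℤ) : Matrix (Fin 2) (Fin 2) ℤ := !![2 * a, b; b, 2 * c]

/-- `Λ(P,Q) = { X ∈ M₂(ℤ) | Xᵀ P = Q Xᴬ }`, where `Xᴬ` is the adjugate. -/
def LambdaSet (P Q : Matrix (Fin 2) (Fin 2) ℤ) : Set (Matrix (Fin 2) (Fin 2) ℤ) :=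
  {X | X.transpose * P = Q * X.adjugate}

/-- The bilinear form on `M₂(ℤ)` associated to the quadratic form `2·det`. -/
def detBil (X Y : Matrix (Fin 2) (Fin 2) ℤ) : ℤ := (X + Y).det - X.det - Y.det

/-- The content `gcd(a,b,c)` of the binary form `[a,b,c]`. -/
def content (a b c : ℤ) : ℕ := Int.gcd (Int.gcd a b) c

/-- An even lattice (given as a subset `L` of `M₂(ℤ)` with the form `2·det`) is primitive
as an abstract lattice iff no integer `m > 1` makes `(1/m)` times the form still even
integral. -/
def PrimitiveLat (L : Set (Matrix (Fin 2) (Fin 2) ℤ)) : Prop :=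
  ¬ ∃ m : ℕ, 1 < m ∧ (∀ X ∈ L, ∀ Y ∈ L, (m : ℤ) ∣ detBil X Y) ∧
      (∀ X ∈ L, (2 * (m : ℤ)) ∣ 2 * X.det)

lemma transpose_of' (x y z w : ℤ) : (!![x, y; z, w]).transpose = !![x, z; y, w] := by
  ext i j; fin_cases i <;> fin_cases j <;> rfl

lemma mem_lambda_iff (a b c A B C x y z w : ℤ) :
    !![x, y; z, w] ∈ LambdaSet (formMatrix a b c) (formMatrix A B C) ↔
      (2*a*x + (b+B)*z - 2*A*w = 0 ∧ (b-B)*x + 2*A*y + 2*c*z = 0 ∧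
       2*a*y + 2*C*z + (b-B)*w = 0 ∧ -2*C*x + (b+B)*y + 2*c*w = 0) := by
  have hmem : !![x, y; z, w] ∈ LambdaSet (formMatrix a b c) (formMatrix A B C) ↔
      (!![x, z; y, w] * !![2*a, b; b, 2*c] = !![2*A, B; B, 2*C] * !![w, -y; -z, x]) := by
    rw [LambdaSet, Set.mem_setOf_eq, transpose_of', Matrix.adjugate_fin_two_of, formMatrix,
      formMatrix]
  rw [hmem]
  constructor
  · intro h
    have h' := fun i j => congrFun (congrFun h i) j
    have h00 := h' 0 0; have h01 := h' 0 1; have h10 := h' 1 0; have h11 := h' 1 1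
    simp [Matrix.mul_apply, Fin.sum_univ_two] at h00 h01 h10 h11
    refine ⟨by linarith, by linarith, by linarith, by linarith⟩
  · rintro ⟨e1,e2,e3,e4⟩
    ext i j
    fin_cases i <;> fin_cases j <;>
      simp [Matrix.mul_apply, Fin.sum_univ_two] <;> linarith

lemma lambda_add {P Q : Matrix (Fin 2) (Fin 2) ℤ} {X Y : Matrix (Fin 2) (Fin 2) ℤ}
    (hX : X ∈ LambdaSet P Q) (hY : Y ∈ LambdaSet P Q) : X + Y ∈ LambdaSet P Q := by
  have hadj : (X + Y).adjugate = X.adjugate + Y.adjugate := by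
    rw [Matrix.adjugate_fin_two, Matrix.adjugate_fin_two X, Matrix.adjugate_fin_two Y]
    ext i j
    fin_cases i <;> fin_cases j <;> simp [Matrix.add_apply] <;> ring
  simp only [LambdaSet, Set.mem_setOf_eq] at *
  rw [Matrix.transpose_add, Matrix.add_mul, hadj, Matrix.mul_add, hX, hY]

lemma content_eq (a b c : ℤ) : content a b c = Nat.gcd (Nat.gcd a.natAbs b.natAbs) c.natAbs := by
  simp [content, Int.gcd]

lemma natCast_dvd_int {n : ℕ} {m : ℤ} (h : (n:ℤ) ∣ m) : n ∣ m.natAbs := by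
  have := Int.natAbs_dvd_natAbs.mpr h
  simpa using this

lemma gcd_dvd_trick (A B C d : ℤ) (n : ℕ) (h1 : (n:ℤ) ∣ A*d) (h2 : (n:ℤ) ∣ B*d)
    (h3 : (n:ℤ) ∣ C*d) : n ∣ content A B C * d.natAbs := by
  have k1 := natCast_dvd_int h1
  have k2 := natCast_dvd_int h2
  have k3 := natCast_dvd_int h3
  rw [Int.natAbs_mul] at k1 k2 k3
  have g1 : n ∣ Nat.gcd (A.natAbs * d.natAbs) (B.natAbs * d.natAbs) := Nat.dvd_gcd k1 k2
  rw [Nat.gcd_mul_right] at g1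
  have g2 : n ∣ Nat.gcd (A.natAbs.gcd B.natAbs * d.natAbs) (C.natAbs * d.natAbs) :=
    Nat.dvd_gcd g1 k3
  rw [Nat.gcd_mul_right, ← content_eq] at g2
  exact g2

lemma content_dvd (a b c : ℤ) :
    ((content a b c : ℕ):ℤ) ∣ a ∧ ((content a b c : ℕ):ℤ) ∣ b ∧ ((content a b c : ℕ):ℤ) ∣ c := by
  have h1 : ((content a b c : ℕ):ℤ) ∣ ((Int.gcd a b : ℕ):ℤ) := Int.gcd_dvd_left _ _
  exact ⟨h1.trans (Int.gcd_dvd_left _ _), h1.trans (Int.gcd_dvd_right _ _), Int.gcd_dvd_right _ _⟩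

lemma six_ids (a b c A B C x y z w : ℤ)
    (e1 : 2*a*x + (b+B)*z - 2*A*w = 0) (e2 : (b-B)*x + 2*A*y + 2*c*z = 0)
    (e3 : 2*a*y + 2*C*z + (b-B)*w = 0) (e4 : -2*C*x + (b+B)*y + 2*c*w = 0) :
    ((content a b c : ℕ):ℤ) ∣ A*(x*w - y*z) ∧ ((content a b c : ℕ):ℤ) ∣ B*(x*w - y*z) ∧
      ((content a b c : ℕ):ℤ) ∣ C*(x*w - y*z) ∧
    ((content A B C : ℕ):ℤ) ∣ a*(x*w - y*z) ∧ ((content A B C : ℕ):ℤ) ∣ b*(x*w - y*z) ∧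
      ((content A B C : ℕ):ℤ) ∣ c*(x*w - y*z) := by
  obtain ⟨hpa, hpb, hpc⟩ := content_dvd a b c
  obtain ⟨hqa, hqb, hqc⟩ := content_dvd A B C
  have i1 : A*(x*w - y*z) = a*x^2 + b*(x*z) + c*z^2 := by
    have h2 : 2*(A*(x*w - y*z)) = 2*(a*x^2 + b*(x*z) + c*z^2) := by
      linear_combination (-x)*e1 - z*e2
    linarith
  have i2 : B*(x*w - y*z) = a*(2*x*y) + b*(x*w+y*z) + c*(2*z*w) := by
    linear_combination (-y)*e1 - w*e2
  have i3 : C*(x*w - y*z) = a*y^2 + b*(y*w) + c*w^2 := by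
    have h2 : 2*(C*(x*w - y*z)) = 2*(a*y^2 + b*(y*w) + c*w^2) := by
      linear_combination (-y)*e3 - w*e4
    linarith
  have i4 : a*(x*w - y*z) = A*w^2 + B*(-(w*z)) + C*z^2 := by
    have h2 : 2*(a*(x*w - y*z)) = 2*(A*w^2 + B*(-(w*z)) + C*z^2) := by
      linear_combination w*e1 - z*e3
    linarith
  have i5 : b*(x*w - y*z) = A*(-(2*w*y)) + B*(w*x+y*z) + C*(-(2*x*z)) := by
    linear_combination w*e2 - z*e4
  have i6 : c*(x*w - y*z) = A*y^2 + B*(-(x*y)) + C*x^2 := by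
    have h2 : 2*(c*(x*w - y*z)) = 2*(A*y^2 + B*(-(x*y)) + C*x^2) := by
      linear_combination (-y)*e2 + x*e4
    linarith
  exact ⟨i1 ▸ dvd_add (dvd_add (hpa.mul_right _) (hpb.mul_right _)) (hpc.mul_right _),
    i2 ▸ dvd_add (dvd_add (hpa.mul_right _) (hpb.mul_right _)) (hpc.mul_right _),
    i3 ▸ dvd_add (dvd_add (hpa.mul_right _) (hpb.mul_right _)) (hpc.mul_right _),
    i4 ▸ dvd_add (dvd_add (hqa.mul_right _) (hqb.mul_right _)) (hqc.mul_right _),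
    i5 ▸ dvd_add (dvd_add (hqa.mul_right _) (hqb.mul_right _)) (hqc.mul_right _),
    i6 ▸ dvd_add (dvd_add (hqa.mul_right _) (hqb.mul_right _)) (hqc.mul_right _)⟩

lemma prime_pick (p : ℕ) (hp : p.Prime) (u v w : ℤ)
    (hg : Int.gcd (Int.gcd u v) w = 1) :
    ∃ x : ℤ, (x = u ∨ x = w ∨ x = u + v + w) ∧ ¬ (p:ℤ) ∣ x := by
  by_contra hcon
  push_neg at hcon
  have d1 := hcon u (Or.inl rfl)
  have d2 := hcon w (Or.inr (Or.inl rfl))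
  have d3 := hcon (u+v+w) (Or.inr (Or.inr rfl))
  have db : (p:ℤ) ∣ v := by
    have h4 := dvd_sub (dvd_sub d3 d1) d2
    have e : u+v+w - u - w = v := by ring
    rwa [e] at h4
  have hone : (p:ℤ) ∣ ((Int.gcd (↑(Int.gcd u v)) w : ℕ):ℤ) := Int.dvd_coe_gcd (Int.dvd_coe_gcd d1 db) d2
  rw [hg] at hone
  have hpd : p ∣ 1 := by exact_mod_cast hone
  exact hp.ne_one (Nat.dvd_one.mp hpd)

theorem stmt17 (a b c a' b' c' : ℤ) (hP : b ^ 2 - 4 * a * c ≠ 0)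
    (hQ : b' ^ 2 - 4 * a' * c' ≠ 0)
    (hsame : b ^ 2 - 4 * a * c = b' ^ 2 - 4 * a' * c') :
    PrimitiveLat (LambdaSet (formMatrix a b c) (formMatrix a' b' c')) ↔
      (Int.gcd (Int.gcd (a / (Nat.gcd (content a b c) (content a' b' c') : ℤ))
            (b / (Nat.gcd (content a b c) (content a' b' c') : ℤ)))
          (c / (Nat.gcd (content a b c) (content a' b' c') : ℤ)) = 1 ∧
       Int.gcd (Int.gcd (a' / (Nat.gcd (content a b c) (content a' b' c') : ℤ))
            (b' / (Nat.gcd (content a b c) (content a' b' c') : ℤ)))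
          (c' / (Nat.gcd (content a b c) (content a' b' c') : ℤ)) = 1) := by
  set lam : ℕ := Nat.gcd (content a b c) (content a' b' c') with hlam
  -- contents are nonzero
  have hcP0 : content a b c ≠ 0 := by
    intro h
    have h1 : Int.gcd (↑(Int.gcd a b)) c = 0 := h
    rw [Int.gcd_eq_zero_iff] at h1
    obtain ⟨h2, hc0⟩ := h1
    have h3 : Int.gcd a b = 0 := by exact_mod_cast h2
    rw [Int.gcd_eq_zero_iff] at h3
    obtain ⟨ha0, hb0⟩ := h3
    apply hP; rw [ha0, hb0, hc0]; ring
  have hcQ0 : content a' b' c' ≠ 0 := by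
    intro h
    have h1 : Int.gcd (↑(Int.gcd a' b')) c' = 0 := h
    rw [Int.gcd_eq_zero_iff] at h1
    obtain ⟨h2, hc0⟩ := h1
    have h3 : Int.gcd a' b' = 0 := by exact_mod_cast h2
    rw [Int.gcd_eq_zero_iff] at h3
    obtain ⟨ha0, hb0⟩ := h3
    apply hQ; rw [ha0, hb0, hc0]; ring
  have hlam0 : lam ≠ 0 := fun h => hcP0 (Nat.eq_zero_of_gcd_eq_zero_left h)
  have hlamZ : ((lam:ℕ):ℤ) ≠ 0 := Int.natCast_ne_zero.mpr hlam0
  -- divide out lam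
  obtain ⟨a₁, ha₁⟩ : ((lam:ℕ):ℤ) ∣ a :=
    (Int.natCast_dvd_natCast.mpr (Nat.gcd_dvd_left _ _)).trans (content_dvd a b c).1
  obtain ⟨b₁, hb₁⟩ : ((lam:ℕ):ℤ) ∣ b :=
    (Int.natCast_dvd_natCast.mpr (Nat.gcd_dvd_left _ _)).trans (content_dvd a b c).2.1
  obtain ⟨c₁, hc₁⟩ : ((lam:ℕ):ℤ) ∣ c :=
    (Int.natCast_dvd_natCast.mpr (Nat.gcd_dvd_left _ _)).trans (content_dvd a b c).2.2
  obtain ⟨a₂, ha₂⟩ : ((lam:ℕ):ℤ) ∣ a' :=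
    (Int.natCast_dvd_natCast.mpr (Nat.gcd_dvd_right _ _)).trans (content_dvd a' b' c').1
  obtain ⟨b₂, hb₂⟩ : ((lam:ℕ):ℤ) ∣ b' :=
    (Int.natCast_dvd_natCast.mpr (Nat.gcd_dvd_right _ _)).trans (content_dvd a' b' c').2.1
  obtain ⟨c₂, hc₂⟩ : ((lam:ℕ):ℤ) ∣ c' :=
    (Int.natCast_dvd_natCast.mpr (Nat.gcd_dvd_right _ _)).trans (content_dvd a' b' c').2.2
  have ea : a / ((lam:ℕ):ℤ) = a₁ := by rw [ha₁]; exact Int.mul_ediv_cancel_left _ hlamZ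
  have eb : b / ((lam:ℕ):ℤ) = b₁ := by rw [hb₁]; exact Int.mul_ediv_cancel_left _ hlamZ
  have ec : c / ((lam:ℕ):ℤ) = c₁ := by rw [hc₁]; exact Int.mul_ediv_cancel_left _ hlamZ
  have ea' : a' / ((lam:ℕ):ℤ) = a₂ := by rw [ha₂]; exact Int.mul_ediv_cancel_left _ hlamZ
  have eb' : b' / ((lam:ℕ):ℤ) = b₂ := by rw [hb₂]; exact Int.mul_ediv_cancel_left _ hlamZ
  have ec' : c' / ((lam:ℕ):ℤ) = c₂ := by rw [hc₂]; exact Int.mul_ediv_cancel_left _ hlamZ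
  rw [ea, eb, ec, ea', eb', ec']
  -- content factorizations
  have hgab : Int.gcd a b = lam * Int.gcd a₁ b₁ := by
    rw [ha₁, hb₁, Int.gcd_mul_left, Int.natAbs_natCast]
  have hgab' : Int.gcd a' b' = lam * Int.gcd a₂ b₂ := by
    rw [ha₂, hb₂, Int.gcd_mul_left, Int.natAbs_natCast]
  have hcP : content a b c = lam * content a₁ b₁ c₁ := by
    rw [content, hgab, hc₁,
      show ((lam * Int.gcd a₁ b₁ : ℕ):ℤ) = ((lam:ℕ):ℤ) * ((Int.gcd a₁ b₁ : ℕ):ℤ) by push_cast; ring,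
      Int.gcd_mul_left, Int.natAbs_natCast]
    rfl
  have hcQ : content a' b' c' = lam * content a₂ b₂ c₂ := by
    rw [content, hgab', hc₂,
      show ((lam * Int.gcd a₂ b₂ : ℕ):ℤ) = ((lam:ℕ):ℤ) * ((Int.gcd a₂ b₂ : ℕ):ℤ) by push_cast; ring,
      Int.gcd_mul_left, Int.natAbs_natCast]
    rfl
  have hp₁0 : content a₁ b₁ c₁ ≠ 0 := by
    intro h; apply hcP0; rw [hcP, h, mul_zero]
  have hq₁0 : content a₂ b₂ c₂ ≠ 0 := by
    intro h; apply hcQ0; rw [hcQ, h, mul_zero]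
  have hcop : Nat.Coprime (content a₁ b₁ c₁) (content a₂ b₂ c₂) := by
    have h0 : 0 < Nat.gcd (content a b c) (content a' b' c') := by
      rw [← hlam]; exact Nat.pos_of_ne_zero hlam0
    have := Nat.coprime_div_gcd_div_gcd h0
    rw [← hlam] at this
    have e1 : content a b c / lam = content a₁ b₁ c₁ := by
      rw [hcP]; exact Nat.mul_div_cancel_left _ (Nat.pos_of_ne_zero hlam0)
    have e2 : content a' b' c' / lam = content a₂ b₂ c₂ := by
      rw [hcQ]; exact Nat.mul_div_cancel_left _ (Nat.pos_of_ne_zero hlam0)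
    rwa [e1, e2] at this
  -- key divisibility for all elements of Lambda
  have hdvd : ∀ X ∈ LambdaSet (formMatrix a b c) (formMatrix a' b' c'),
      ((content a₁ b₁ c₁ * content a₂ b₂ c₂ : ℕ):ℤ) ∣ X.det := by
    intro X hX
    rw [Matrix.eta_fin_two X] at hX
    obtain ⟨e1, e2, e3, e4⟩ := (mem_lambda_iff a b c a' b' c' _ _ _ _).mp hX
    obtain ⟨s1, s2, s3, s4, s5, s6⟩ := six_ids a b c a' b' c' _ _ _ _ e1 e2 e3 e4
    set d : ℤ := X 0 0 * X 1 1 - X 0 1 * X 1 0 with hd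
    have k1 : content a b c ∣ content a' b' c' * d.natAbs := gcd_dvd_trick _ _ _ _ _ s1 s2 s3
    have k2 : content a' b' c' ∣ content a b c * d.natAbs := gcd_dvd_trick _ _ _ _ _ s4 s5 s6
    rw [hcP, hcQ, mul_assoc] at k1 k2
    have h1 : content a₁ b₁ c₁ ∣ content a₂ b₂ c₂ * d.natAbs :=
      (Nat.mul_dvd_mul_iff_left (Nat.pos_of_ne_zero hlam0)).mp k1
    have h2 : content a₂ b₂ c₂ ∣ content a₁ b₁ c₁ * d.natAbs :=
      (Nat.mul_dvd_mul_iff_left (Nat.pos_of_ne_zero hlam0)).mp k2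
    have hfin : content a₁ b₁ c₁ * content a₂ b₂ c₂ ∣ d.natAbs :=
      Nat.Coprime.mul_dvd_of_dvd_of_dvd hcop (hcop.dvd_of_dvd_mul_left h1)
        (hcop.symm.dvd_of_dvd_mul_left h2)
    have : ((content a₁ b₁ c₁ * content a₂ b₂ c₂ : ℕ):ℤ) ∣ d :=
      Int.dvd_natAbs.mp (Int.natCast_dvd_natCast.mpr hfin)
    rwa [Matrix.det_fin_two]
  show _ ↔ (content a₁ b₁ c₁ = 1 ∧ content a₂ b₂ c₂ = 1)
  constructor
  · -- primitive → both primitive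
    intro hPrim
    by_contra hnot
    rw [not_and_or] at hnot
    have hm1 : 1 < content a₁ b₁ c₁ * content a₂ b₂ c₂ := by
      rcases hnot with h | h
      · have h2 : 2 ≤ content a₁ b₁ c₁ := by omega
        have h3 : 1 ≤ content a₂ b₂ c₂ := Nat.pos_of_ne_zero hq₁0
        calc 1 < 2 * 1 := by norm_num
          _ ≤ content a₁ b₁ c₁ * content a₂ b₂ c₂ := Nat.mul_le_mul h2 h3
      · have h2 : 2 ≤ content a₂ b₂ c₂ := by omega
        have h3 : 1 ≤ content a₁ b₁ c₁ := Nat.pos_of_ne_zero hp₁0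
        calc 1 < 1 * 2 := by norm_num
          _ ≤ content a₁ b₁ c₁ * content a₂ b₂ c₂ := Nat.mul_le_mul h3 h2
    exact hPrim ⟨content a₁ b₁ c₁ * content a₂ b₂ c₂, hm1,
      fun X hX Y hY => dvd_sub (dvd_sub (hdvd _ (lambda_add hX hY)) (hdvd X hX)) (hdvd Y hY),
      fun X hX => mul_dvd_mul_left 2 (hdvd X hX)⟩
  · -- both primitive → primitive
    rintro ⟨hp1, hq1⟩ ⟨m, hm1, hbil, hdet2⟩
    have hmd : ∀ X ∈ LambdaSet (formMatrix a b c) (formMatrix a' b' c'), (m:ℤ) ∣ X.det :=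
      fun X hX => (mul_dvd_mul_iff_left (two_ne_zero (α := ℤ))).mp (hdet2 X hX)
    have hpp : m.minFac.Prime := Nat.minFac_prime (by omega)
    have hpZ : Prime ((m.minFac:ℕ):ℤ) := Int.prime_iff_natAbs_prime.mpr (by simpa using hpp)
    have hpm : ((m.minFac:ℕ):ℤ) ∣ (m:ℤ) := Int.natCast_dvd_natCast.mpr (Nat.minFac_dvd m)
    -- scaled discriminant
    rw [ha₁, hb₁, hc₁, ha₂, hb₂, hc₂] at hsame
    have hd1 : b₁^2 - 4*a₁*c₁ = b₂^2 - 4*a₂*c₂ := by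
      have h0 : ((lam:ℕ):ℤ)^2 * (b₁^2-4*a₁*c₁) = ((lam:ℕ):ℤ)^2 * (b₂^2-4*a₂*c₂) := by
        linear_combination hsame
      exact mul_left_cancel₀ (pow_ne_zero 2 hlamZ) h0
    -- parity : get t with b₂ = b₁ + 2t
    obtain ⟨t, hBt⟩ : ∃ t : ℤ, b₂ = b₁ + 2*t := by
      rcases Int.even_or_odd (b₂ - b₁) with ⟨t, ht⟩ | ⟨t, ht⟩
      · exact ⟨t, by omega⟩
      · exfalso
        have h4 : (b₂ - b₁) * (b₂ + b₁) = 4*(a₂*c₂ - a₁*c₁) := by linear_combination -hd1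
        have hodd : Odd ((b₂ - b₁) * (b₂ + b₁)) :=
          Odd.mul ⟨t, ht⟩ ⟨t + b₁, by omega⟩
        rw [h4] at hodd
        obtain ⟨k, hk⟩ := hodd
        omega
    subst hBt
    have hK : a₂*c₂ = t^2 + b₁*t + a₁*c₁ := by
      have h4 : 4*(a₂*c₂) = 4*(t^2 + b₁*t + a₁*c₁) := by linear_combination hd1
      linarith
    -- scaling of membership
    have hscale : ∀ X, X ∈ LambdaSet (formMatrix a₁ b₁ c₁) (formMatrix a₂ (b₁+2*t) c₂) →
        X ∈ LambdaSet (formMatrix a b c) (formMatrix a' b' c') := by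
      intro X hX
      have hP' : formMatrix a b c = ((lam:ℕ):ℤ) • formMatrix a₁ b₁ c₁ := by
        rw [ha₁, hb₁, hc₁]
        ext i j
        fin_cases i <;> fin_cases j <;> simp [formMatrix] <;> ring
      have hQ' : formMatrix a' b' c' = ((lam:ℕ):ℤ) • formMatrix a₂ (b₁+2*t) c₂ := by
        rw [ha₂, hb₂, hc₂]
        ext i j
        fin_cases i <;> fin_cases j <;> simp [formMatrix] <;> ring
      simp only [LambdaSet, Set.mem_setOf_eq] at hX ⊢
      rw [hP', hQ', Matrix.mul_smul, Matrix.smul_mul, hX]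
    -- the nine elements
    have key : ∀ (u v : ℤ) (M : Matrix (Fin 2) (Fin 2) ℤ),
        M ∈ LambdaSet (formMatrix a₁ b₁ c₁) (formMatrix a₂ (b₁+2*t) c₂) →
        M.det = u * v → ((m.minFac:ℕ):ℤ) ∣ u * v :=
      fun u v M hM hMdet => hMdet ▸ (hpm.trans (hmd _ (hscale _ hM)))
    have h11 : ((m.minFac:ℕ):ℤ) ∣ a₁ * a₂ :=
      key a₁ a₂ !![a₂, t; 0, a₁]
        ((mem_lambda_iff _ _ _ _ _ _ _ _ _ _).mpr
          ⟨by ring, by ring, by ring, by linear_combination (-2:ℤ)*hK⟩)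
        (by rw [Matrix.det_fin_two_of]; ring)
    have h12 : ((m.minFac:ℕ):ℤ) ∣ a₁ * c₂ :=
      key a₁ c₂ !![t+b₁, c₂; -a₁, 0]
        ((mem_lambda_iff _ _ _ _ _ _ _ _ _ _).mpr
          ⟨by ring, by linear_combination (2:ℤ)*hK, by ring, by ring⟩)
        (by rw [Matrix.det_fin_two_of]; ring)
    have h13 : ((m.minFac:ℕ):ℤ) ∣ a₁ * (a₂ + (b₁+2*t) + c₂) :=
      key a₁ _ !![a₂+b₁+t, t+c₂; -a₁, a₁]
        ((mem_lambda_iff _ _ _ _ _ _ _ _ _ _).mpr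
          ⟨by ring, by linear_combination (2:ℤ)*hK, by ring, by linear_combination (-2:ℤ)*hK⟩)
        (by rw [Matrix.det_fin_two_of]; ring)
    have h21 : ((m.minFac:ℕ):ℤ) ∣ c₁ * a₂ :=
      key c₁ a₂ !![0, -c₁; a₂, t+b₁]
        ((mem_lambda_iff _ _ _ _ _ _ _ _ _ _).mpr
          ⟨by ring, by ring, by linear_combination (2:ℤ)*hK, by ring⟩)
        (by rw [Matrix.det_fin_two_of]; ring)
    have h22 : ((m.minFac:ℕ):ℤ) ∣ c₁ * c₂ :=
      key c₁ c₂ !![c₁, 0; t, c₂]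
        ((mem_lambda_iff _ _ _ _ _ _ _ _ _ _).mpr
          ⟨by linear_combination (-2:ℤ)*hK, by ring, by ring, by ring⟩)
        (by rw [Matrix.det_fin_two_of]; ring)
    have h23 : ((m.minFac:ℕ):ℤ) ∣ c₁ * (a₂ + (b₁+2*t) + c₂) :=
      key c₁ _ !![c₁, -c₁; a₂+t, t+b₁+c₂]
        ((mem_lambda_iff _ _ _ _ _ _ _ _ _ _).mpr
          ⟨by linear_combination (-2:ℤ)*hK, by ring, by linear_combination (2:ℤ)*hK, by ring⟩)
        (by rw [Matrix.det_fin_two_of]; ring)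
    have h31 : ((m.minFac:ℕ):ℤ) ∣ (a₁+b₁+c₁) * a₂ :=
      key _ a₂ !![a₂, t-c₁; a₂, a₁+b₁+t]
        ((mem_lambda_iff _ _ _ _ _ _ _ _ _ _).mpr
          ⟨by ring, by ring, by linear_combination (2:ℤ)*hK, by linear_combination (-2:ℤ)*hK⟩)
        (by rw [Matrix.det_fin_two_of]; ring)
    have h32 : ((m.minFac:ℕ):ℤ) ∣ (a₁+b₁+c₁) * c₂ :=
      key _ c₂ !![t+b₁+c₁, c₂; t-a₁, c₂]
        ((mem_lambda_iff _ _ _ _ _ _ _ _ _ _).mpr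
          ⟨by linear_combination (-2:ℤ)*hK, by linear_combination (2:ℤ)*hK, by ring, by ring⟩)
        (by rw [Matrix.det_fin_two_of]; ring)
    have h33 : ((m.minFac:ℕ):ℤ) ∣ (a₁+b₁+c₁) * (a₂ + (b₁+2*t) + c₂) :=
      key _ _ !![a₂+t+b₁+c₁, t+c₂-c₁; a₂+t-a₁, t+c₂+a₁+b₁]
        ((mem_lambda_iff _ _ _ _ _ _ _ _ _ _).mpr
          ⟨by linear_combination (-2:ℤ)*hK, by linear_combination (2:ℤ)*hK,
           by linear_combination (2:ℤ)*hK, by linear_combination (-2:ℤ)*hK⟩)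
        (by rw [Matrix.det_fin_two_of]; ring)
    obtain ⟨u, hu, hpu⟩ := prime_pick m.minFac hpp a₁ b₁ c₁ hp1
    obtain ⟨v, hv, hpv⟩ := prime_pick m.minFac hpp a₂ (b₁+2*t) c₂ hq1
    have huv : ((m.minFac:ℕ):ℤ) ∣ u * v := by
      rcases hu with rfl | rfl | rfl <;> rcases hv with rfl | rfl | rfl
      exacts [h11, h12, h13, h21, h22, h23, h31, h32, h33]
    rcases hpZ.dvd_mul.mp huv with h | h
    · exact hpu h
    · exact hpv h
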